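/- Let Z_{ij} ~ Bernoulli(p_{ij}) independently for i = 1,…,R = S^ρ and j = 1,…,C = S^κ, with S^{1−ρ−κ} ≤ p_{ij} ≤ Υ·S^{1−ρ−κ} where 1 ≤ Υ < ∞, ρ,κ ∈ (0,1), ρ+κ > 1 and 2ρ+κ < 2. Then for every ε > 0, P((1−ε)S^{1−ρ} ≤ min_i N_{i·} ≤ max_i N_{i·} ≤ (Υ+ε)S^{1−ρ}) → 1 as S → ∞, where N_{i·} = ∑_j Z_{ij}. -/

import Mathlib

open MeasureTheory Filter ProbabilityTheory
open Real


lemma my_precomp {Ω ι κ β : Type*} [MeasurableSpace Ω] {μ : Measure Ω}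
    [mβ : MeasurableSpace β] {f : ι → Ω → β}
    (h : iIndepFun f μ) (g : κ → ι) (hg : Function.Injective g) :
    iIndepFun (fun k => f (g k)) μ := by
  classical
  rw [iIndepFun_iff_measure_inter_preimage_eq_mul] at h ⊢
  intro T sets hsets
  have hext : ∀ k, Function.extend g sets (fun _ => Set.univ) (g k) = sets k :=
    fun k => hg.extend_apply _ _ _
  have H := h (T.map ⟨g, hg⟩) (sets := Function.extend g sets (fun _ => Set.univ)) ?_
  · have h1 : (⋂ i ∈ T.map ⟨g, hg⟩, f i ⁻¹' Function.extend g sets (fun _ => Set.univ) i)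
        = ⋂ k ∈ T, f (g k) ⁻¹' sets k := by
      ext ω
      simp only [Set.mem_iInter, Finset.mem_map, Function.Embedding.coeFn_mk]
      constructor
      · intro H k hk
        have := H (g k) ⟨k, hk, rfl⟩
        rwa [hext] at this
      · rintro H i ⟨k, hk, rfl⟩
        rw [hext]; exact H k hk
    have h2 : (∏ i ∈ T.map ⟨g, hg⟩, μ (f i ⁻¹' Function.extend g sets (fun _ => Set.univ) i))
        = ∏ k ∈ T, μ (f (g k) ⁻¹' sets k) := by
      rw [Finset.prod_map]
      exact Finset.prod_congr rfl fun k _ => by rw [Function.Embedding.coeFn_mk, hext]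
    rw [h1, h2] at H
    exact H
  · intro i hi
    rcases Finset.mem_map.1 hi with ⟨k, hk, rfl⟩
    simp only [Function.Embedding.coeFn_mk]
    rw [hext]; exact hsets k hk

lemma my_bool_meas : Measurable (fun b : Bool => if b then (1:ℝ) else 0) :=
  measurable_from_top

lemma my_mgf_indicator {Ω : Type*} [MeasurableSpace Ω] {μ : Measure Ω} [IsProbabilityMeasure μ]
    {X : Ω → Bool} (hX : Measurable X) {p : ℝ} (t : ℝ) (hp0 : 0 ≤ p)
    (hp : μ {ω | X ω = true} = ENNReal.ofReal p) :
    mgf (fun ω => if X ω then (1:ℝ) else 0) μ t = 1 + (Real.exp t - 1) * p := by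
  have hA : MeasurableSet {ω | X ω = true} := hX (measurableSet_singleton true)
  have hfun : (fun ω => Real.exp (t * (if X ω then (1:ℝ) else 0)))
      = fun ω => 1 + Set.indicator {ω | X ω = true} (fun _ => Real.exp t - 1) ω := by
    funext ω
    by_cases h : X ω <;> simp [h]
  have hint : Integrable (Set.indicator {ω | X ω = true} (fun _ => Real.exp t - 1)) μ :=
    (integrable_indicator_iff hA).2 (integrableOn_const (measure_ne_top _ _) enorm_ne_top)
  rw [mgf, hfun, integral_add (integrable_const 1) hint, integral_const,
    integral_indicator_const _ hA, measureReal_def μ {ω | X ω = true}, hp, ENNReal.toReal_ofReal hp0]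
  simp [mul_comm]


section
variable {Ω : Type*} [MeasurableSpace Ω] {μ : Measure Ω} [IsProbabilityMeasure μ]
  {n : ℕ} {X : Fin n → Ω → Bool} {p : Fin n → ℝ}

lemma my_mgf_sum_le (hXm : ∀ j, Measurable (X j))
    (hind : iIndepFun X μ)
    (hp : ∀ j, μ {ω | X j ω = true} = ENNReal.ofReal (p j))
    (hp0 : ∀ j, 0 ≤ p j) (hp1 : ∀ j, p j ≤ 1) (t : ℝ) :
    mgf (∑ j, fun ω => if X j ω then (1:ℝ) else 0) μ t
      ≤ Real.exp ((Real.exp t - 1) * ∑ j, p j) := by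
  have hYm : ∀ j, Measurable (fun ω => if X j ω then (1:ℝ) else 0) :=
    fun j => (measurable_from_top (f := fun b : Bool => if b then (1:ℝ) else 0)).comp (hXm j)
  have hind' : iIndepFun
      (fun j (ω : Ω) => if X j ω then (1:ℝ) else 0) μ :=
    hind.comp (fun _ b => if b then (1:ℝ) else 0) (fun _ => measurable_from_top)
  rw [hind'.mgf_sum hYm Finset.univ]
  have heq : ∀ j : Fin n, mgf (fun ω => if X j ω then (1:ℝ) else 0) μ t
      = 1 + (Real.exp t - 1) * p j := fun j => my_mgf_indicator (hXm j) t (hp0 j) (hp j)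
  calc (∏ j, mgf (fun ω => if X j ω then (1:ℝ) else 0) μ t)
      = ∏ j, (1 + (Real.exp t - 1) * p j) := Finset.prod_congr rfl fun j _ => heq j
    _ ≤ ∏ j, Real.exp ((Real.exp t - 1) * p j) := by
        apply Finset.prod_le_prod
        · intro j _
          nlinarith [Real.exp_pos t, hp0 j, hp1 j]
        · intro j _
          linarith [Real.add_one_le_exp ((Real.exp t - 1) * p j)]
    _ = Real.exp ((Real.exp t - 1) * ∑ j, p j) := by
        rw [← Real.exp_sum, Finset.mul_sum]

lemma my_int_exp (hXm : ∀ j, Measurable (X j)) (t : ℝ) :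
    Integrable (fun ω => Real.exp (t * (∑ j, fun ω => if X j ω then (1:ℝ) else 0) ω)) μ := by
  have hYm : Measurable (fun ω => ∑ j, if X j ω then (1:ℝ) else 0) :=
    Finset.measurable_sum _ fun j _ =>
      (measurable_from_top (f := fun b : Bool => if b then (1:ℝ) else 0)).comp (hXm j)
  refine Integrable.mono' (integrable_const (Real.exp (|t| * n)))
    ((hYm.const_mul t).exp.aestronglyMeasurable.congr ?_) (ae_of_all _ fun ω => ?_)
  · filter_upwards with ω
    simp [Finset.sum_apply]
  · rw [Real.norm_eq_abs, Real.abs_exp, Real.exp_le_exp]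
    have h1 : (∑ j, fun ω => if X j ω then (1:ℝ) else 0) ω
        = ∑ j, if X j ω then (1:ℝ) else 0 := by simp [Finset.sum_apply]
    rw [h1]
    have h2 : |∑ j, if X j ω then (1:ℝ) else 0| ≤ n := by
      rw [abs_of_nonneg (Finset.sum_nonneg fun j _ => by positivity)]
      calc (∑ j, if X j ω then (1:ℝ) else 0) ≤ ∑ j : Fin n, (1:ℝ) := by
            apply Finset.sum_le_sum; intro j _; split <;> norm_num
        _ = n := by simp
    calc t * (∑ j, if X j ω then (1:ℝ) else 0) ≤ |t * ∑ j, if X j ω then (1:ℝ) else 0| :=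
          le_abs_self _
      _ = |t| * |∑ j, if X j ω then (1:ℝ) else 0| := abs_mul _ _
      _ ≤ |t| * n := by gcongr
      _ ≤ |t| * n := le_rfl

lemma my_tail_up (hXm : ∀ j, Measurable (X j))
    (hind : iIndepFun X μ)
    (hp : ∀ j, μ {ω | X j ω = true} = ENNReal.ofReal (p j))
    (hp0 : ∀ j, 0 ≤ p j) (hp1 : ∀ j, p j ≤ 1) {t : ℝ} (a : ℝ) (ht : 0 ≤ t) :
    μ {ω | a ≤ ∑ j, if X j ω then (1:ℝ) else 0}
      ≤ ENNReal.ofReal (Real.exp (-t * a + (Real.exp t - 1) * ∑ j, p j)) := by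
  have hset : {ω | a ≤ ∑ j, if X j ω then (1:ℝ) else 0}
      = {ω | a ≤ (∑ j, fun ω => if X j ω then (1:ℝ) else 0) ω} := by
    ext ω; simp [Finset.sum_apply]
  have h1 := measure_ge_le_exp_mul_mgf (μ := μ)
    (X := ∑ j, fun ω => if X j ω then (1:ℝ) else 0) a ht (my_int_exp hXm t)
  have h2 := my_mgf_sum_le hXm hind hp hp0 hp1 t
  rw [hset, ← ENNReal.ofReal_toReal (measure_ne_top μ _)]
  apply ENNReal.ofReal_le_ofReal
  calc (μ {ω | a ≤ (∑ j, fun ω => if X j ω then (1:ℝ) else 0) ω}).toReal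
      ≤ Real.exp (-t * a) * mgf (∑ j, fun ω => if X j ω then (1:ℝ) else 0) μ t := h1
    _ ≤ Real.exp (-t * a) * Real.exp ((Real.exp t - 1) * ∑ j, p j) := by
        gcongr
    _ = Real.exp (-t * a + (Real.exp t - 1) * ∑ j, p j) := (Real.exp_add _ _).symm

lemma my_tail_lo (hXm : ∀ j, Measurable (X j))
    (hind : iIndepFun X μ)
    (hp : ∀ j, μ {ω | X j ω = true} = ENNReal.ofReal (p j))
    (hp0 : ∀ j, 0 ≤ p j) (hp1 : ∀ j, p j ≤ 1) {t : ℝ} (a : ℝ) (ht : t ≤ 0) :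
    μ {ω | (∑ j, if X j ω then (1:ℝ) else 0) ≤ a}
      ≤ ENNReal.ofReal (Real.exp (-t * a + (Real.exp t - 1) * ∑ j, p j)) := by
  have hset : {ω | (∑ j, if X j ω then (1:ℝ) else 0) ≤ a}
      = {ω | (∑ j, fun ω => if X j ω then (1:ℝ) else 0) ω ≤ a} := by
    ext ω; simp [Finset.sum_apply]
  have h1 := measure_le_le_exp_mul_mgf (μ := μ)
    (X := ∑ j, fun ω => if X j ω then (1:ℝ) else 0) a ht (my_int_exp hXm t)
  have h2 := my_mgf_sum_le hXm hind hp hp0 hp1 t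
  rw [hset, ← ENNReal.ofReal_toReal (measure_ne_top μ _)]
  apply ENNReal.ofReal_le_ofReal
  calc (μ {ω | (∑ j, fun ω => if X j ω then (1:ℝ) else 0) ω ≤ a}).toReal
      ≤ Real.exp (-t * a) * mgf (∑ j, fun ω => if X j ω then (1:ℝ) else 0) μ t := h1
    _ ≤ Real.exp (-t * a) * Real.exp ((Real.exp t - 1) * ∑ j, p j) := by
        gcongr
    _ = Real.exp (-t * a + (Real.exp t - 1) * ∑ j, p j) := (Real.exp_add _ _).symm

end

lemma my_arith_up {t δ Υ M q Sp e c : ℝ} (ht0 : 0 < t) (hc : c = t*δ/2) (hδ0 : 0 < δ)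
    (he0 : 0 ≤ e - 1) (he : e ≤ 1 + t + t^2) (hS0 : 0 ≤ Sp) (hS : Sp ≤ Υ*M + Υ*q)
    (hM0 : 0 ≤ M) (hq0 : 0 ≤ q) (htY : t^2*Υ ≤ t*δ/8) (hCm : (Υ+δ/8)*q ≤ δ/8*M) :
    -t * ((Υ+δ) * M) + (e - 1) * Sp ≤ -c * M := by
  have h3 : (e-1)*Sp ≤ (t+t^2)*(Υ*M+Υ*q) :=
    mul_le_mul (by linarith) hS hS0 (by nlinarith [ht0.le, sq_nonneg t])
  have h4 : t^2*Υ*q ≤ (t*δ/8)*q := mul_le_mul_of_nonneg_right htY hq0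
  have h5 : t^2*Υ*M ≤ (t*δ/8)*M := mul_le_mul_of_nonneg_right htY hM0
  have h6 : t*((Υ+δ/8)*q) ≤ t*(δ/8*M) := mul_le_mul_of_nonneg_left hCm ht0.le
  have h7 : 0 ≤ t*δ*M := mul_nonneg (mul_nonneg ht0.le hδ0.le) hM0
  subst hc
  nlinarith [h3, h4, h5, h6, h7]

lemma my_arith_lo {t δ M Sp e c : ℝ} (ht0 : 0 < t) (hc : c = t*δ/2) (hδ0 : 0 < δ)
    (he : e ≤ 1 - t + t^2) (hem : e - 1 ≤ 0) (hM0 : 0 ≤ M) (hSge : M ≤ Sp)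
    (ht8 : t^2 ≤ t*δ/8) :
    -(-t) * ((1-δ) * M) + (e - 1) * Sp ≤ -c * M := by
  have h3 : (e-1)*Sp ≤ (e-1)*M := mul_le_mul_of_nonpos_left hSge hem
  have h8 : (e-1)*M ≤ (-t + t^2)*M := mul_le_mul_of_nonneg_right (by linarith) hM0
  have h5 : t^2*M ≤ (t*δ/8)*M := mul_le_mul_of_nonneg_right ht8 hM0
  have h7 : 0 ≤ t*δ*M := mul_nonneg (mul_nonneg ht0.le hδ0.le) hM0
  subst hc
  nlinarith [h3, h8, h5, h7]

lemma my_exp_quad {t : ℝ} (ht : |t| ≤ 1) : Real.exp t ≤ 1 + t + t^2 := by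
  have h := Real.exp_bound ht (n := 2) (by norm_num)
  simp only [Finset.sum_range_succ, Finset.sum_range_zero, pow_zero, Nat.factorial] at h
  have h2 := (abs_le.1 h).2
  have h3 : |t|^2 = t^2 := sq_abs t
  norm_num at h2
  nlinarith [sq_abs t, sq_nonneg t]

set_option maxHeartbeats 1000000 in
theorem stmt_12 (ρ κ Υ : ℝ)
    (hρ : ρ ∈ Set.Ioo (0 : ℝ) 1) (hκ : κ ∈ Set.Ioo (0 : ℝ) 1)
    (hsum : 1 < ρ + κ) (h2 : 2 * ρ + κ < 2) (hΥ : 1 ≤ Υ)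
    (R C : ℕ → ℕ)
    (hR : ∀ S, R S = Nat.ceil ((S : ℝ) ^ ρ)) (hC : ∀ S, C S = Nat.ceil ((S : ℝ) ^ κ))
    (Ω : ℕ → Type) [∀ S, MeasurableSpace (Ω S)]
    (μ : ∀ S, Measure (Ω S)) [∀ S, IsProbabilityMeasure (μ S)]
    (Z : ∀ S, Fin (R S) → Fin (C S) → Ω S → Bool)
    (hmeas : ∀ (S : ℕ) (i) (j), Measurable (Z S i j))
    (hind : ∀ S, iIndepFun
      (fun (p : Fin (R S) × Fin (C S)) ω => Z S p.1 p.2 ω) (μ S))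
    (P : ∀ S, Fin (R S) → Fin (C S) → ℝ)
    (hmarg : ∀ (S : ℕ) (i) (j), μ S {ω | Z S i j ω = true} = ENNReal.ofReal (P S i j))
    (hPlo : ∀ (S : ℕ) (i) (j), (S : ℝ) ^ (1 - ρ - κ) ≤ P S i j)
    (hPhi : ∀ (S : ℕ) (i) (j), P S i j ≤ Υ * (S : ℝ) ^ (1 - ρ - κ))
    (ε : ℝ) (hε : 0 < ε) :
    Tendsto (fun S => μ S {ω | ∀ i : Fin (R S),
        (1 - ε) * (S : ℝ) ^ (1 - ρ) ≤ (∑ j, if Z S i j ω then (1 : ℝ) else 0) ∧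
        (∑ j, if Z S i j ω then (1 : ℝ) else 0) ≤ (Υ + ε) * (S : ℝ) ^ (1 - ρ)})
      atTop (nhds 1) := by
  obtain ⟨hρ0, hρ1⟩ := hρ
  obtain ⟨hκ0, hκ1⟩ := hκ
  have hΥ0 : (0:ℝ) < Υ := lt_of_lt_of_le one_pos hΥ
  suffices key : ∀ δ : ℝ, 0 < δ → δ ≤ 1/2 →
      Tendsto (fun S => μ S {ω | ∀ i : Fin (R S),
        (1 - δ) * (S : ℝ) ^ (1 - ρ) ≤ (∑ j, if Z S i j ω then (1 : ℝ) else 0) ∧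
        (∑ j, if Z S i j ω then (1 : ℝ) else 0) ≤ (Υ + δ) * (S : ℝ) ^ (1 - ρ)})
      atTop (nhds 1) by
    have hδ0 : 0 < min ε (1/2) := lt_min hε (by norm_num)
    refine tendsto_of_tendsto_of_tendsto_of_le_of_le
      (key _ hδ0 (min_le_right _ _)) tendsto_const_nhds
      (fun S => measure_mono ?_) (fun S => prob_le_one)
    intro ω hω
    refine fun i => ⟨le_trans ?_ ((hω i).1), le_trans ((hω i).2) ?_⟩
    · apply mul_le_mul_of_nonneg_right ?_ (Real.rpow_nonneg (Nat.cast_nonneg S) _)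
      have := min_le_left ε (1/2); linarith
    · apply mul_le_mul_of_nonneg_right ?_ (Real.rpow_nonneg (Nat.cast_nonneg S) _)
      have := min_le_left ε (1/2); linarith
  intro δ hδ0 hδ2
  set t := min (δ/(8*Υ)) 1 with htdef
  have ht0 : 0 < t := lt_min (by positivity) one_pos
  have ht1 : t ≤ 1 := min_le_right _ _
  have htδ : t ≤ δ/(8*Υ) := min_le_left _ _
  set c := t*δ/2 with hcdef
  have hc0 : 0 < c := by positivity
  clear_value t c
  have hScast : Tendsto (fun S : ℕ => (S:ℝ)) atTop atTop := tendsto_natCast_atTop_atTop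
  have hq0 : Tendsto (fun S : ℕ => (S:ℝ) ^ (1-ρ-κ)) atTop (nhds 0) := by
    refine ((tendsto_rpow_neg_atTop (y := ρ+κ-1) (by linarith)).comp hScast).congr fun S => ?_
    simp only [Function.comp_apply]
    congr 1; ring
  have hqκ : Tendsto (fun S : ℕ => (S:ℝ) ^ (-κ)) atTop (nhds 0) :=
    (tendsto_rpow_neg_atTop hκ0).comp hScast
  have hB : ∀ᶠ S : ℕ in atTop, Υ * (S:ℝ)^(1-ρ-κ) ≤ 1 := by
    have h := hq0.const_mul Υ
    rw [mul_zero] at h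
    exact h.eventually (eventually_le_nhds one_pos)
  have hCc : ∀ᶠ S : ℕ in atTop, (Υ + δ/8) * (S:ℝ)^(-κ) ≤ δ/8 := by
    have h := hqκ.const_mul (Υ + δ/8)
    rw [mul_zero] at h
    exact h.eventually (eventually_le_nhds (by positivity))
  have hS1 : ∀ᶠ S : ℕ in atTop, (1:ℝ) ≤ (S:ℝ) := hScast.eventually_ge_atTop 1
  -- the eventual bound on the complement
  have hbound : ∀ᶠ S : ℕ in atTop, μ S {ω | ∀ i : Fin (R S),
        (1 - δ) * (S : ℝ) ^ (1 - ρ) ≤ (∑ j, if Z S i j ω then (1 : ℝ) else 0) ∧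
        (∑ j, if Z S i j ω then (1 : ℝ) else 0) ≤ (Υ + δ) * (S : ℝ) ^ (1 - ρ)}ᶜ
      ≤ ENNReal.ofReal (2*((S:ℝ)^ρ+1) * Real.exp (-c * (S:ℝ)^(1-ρ))) := by
    filter_upwards [hS1, hB, hCc] with S h1 hB' hCc'
    have hSpos : (0:ℝ) < S := lt_of_lt_of_le one_pos h1
    have hM0 : (0:ℝ) ≤ (S:ℝ)^(1-ρ) := Real.rpow_nonneg hSpos.le _
    have hq0' : (0:ℝ) ≤ (S:ℝ)^(1-ρ-κ) := Real.rpow_nonneg hSpos.le _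
    have hMq : (S:ℝ)^κ * (S:ℝ)^(1-ρ-κ) = (S:ℝ)^(1-ρ) := by
      rw [← Real.rpow_add hSpos]; congr 1 <;> ring
    have hMq2 : (S:ℝ)^(1-ρ) * (S:ℝ)^(-κ) = (S:ℝ)^(1-ρ-κ) := by
      rw [← Real.rpow_add hSpos]; congr 1 <;> ring
    have hp0 : ∀ i j, 0 ≤ P S i j := fun i j => le_trans (Real.rpow_nonneg hSpos.le _) (hPlo S i j)
    have hp1 : ∀ i j, P S i j ≤ 1 := fun i j => le_trans (hPhi S i j) hB'
    have hpsum0 : ∀ i, (0:ℝ) ≤ ∑ j, P S i j := fun i => Finset.sum_nonneg fun j _ => hp0 i j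
    have hsum_le : ∀ i, (∑ j, P S i j) ≤ Υ*(S:ℝ)^(1-ρ) + Υ*(S:ℝ)^(1-ρ-κ) := by
      intro i
      calc ∑ j, P S i j ≤ ∑ _j : Fin (C S), Υ * (S:ℝ)^(1-ρ-κ) :=
            Finset.sum_le_sum fun j _ => hPhi S i j
        _ = (C S) * (Υ * (S:ℝ)^(1-ρ-κ)) := by
            simp [Finset.sum_const, nsmul_eq_mul]
        _ ≤ ((S:ℝ)^κ + 1) * (Υ * (S:ℝ)^(1-ρ-κ)) := by
            apply mul_le_mul_of_nonneg_right ?_ (by positivity)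
            rw [hC S]
            exact (Nat.ceil_lt_add_one (Real.rpow_nonneg hSpos.le _)).le
        _ = Υ*((S:ℝ)^κ * (S:ℝ)^(1-ρ-κ)) + Υ*(S:ℝ)^(1-ρ-κ) := by ring
        _ = Υ*(S:ℝ)^(1-ρ) + Υ*(S:ℝ)^(1-ρ-κ) := by rw [hMq]
    have hsum_ge : ∀ i, (S:ℝ)^(1-ρ) ≤ ∑ j, P S i j := by
      intro i
      calc (S:ℝ)^(1-ρ) = (S:ℝ)^κ * (S:ℝ)^(1-ρ-κ) := hMq.symm
        _ ≤ (C S) * (S:ℝ)^(1-ρ-κ) := by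
            apply mul_le_mul_of_nonneg_right ?_ hq0'
            rw [hC S]; exact Nat.le_ceil _
        _ = ∑ _j : Fin (C S), (S:ℝ)^(1-ρ-κ) := by simp [nsmul_eq_mul]
        _ ≤ ∑ j, P S i j := Finset.sum_le_sum fun j _ => hPlo S i j
    have habs : |t| ≤ 1 := abs_le.2 ⟨by linarith, ht1⟩
    have he1 : Real.exp t ≤ 1 + t + t^2 := my_exp_quad habs
    have he2 : Real.exp (-t) ≤ 1 - t + t^2 := by
      have h := my_exp_quad (t := -t) (by rwa [abs_neg])
      nlinarith [h]
    have he0 : 0 ≤ Real.exp t - 1 := by nlinarith [Real.add_one_le_exp t, ht0.le]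
    have hem : Real.exp (-t) - 1 ≤ 0 := by
      have : Real.exp (-t) ≤ 1 := Real.exp_le_one_iff.2 (by linarith)
      linarith
    have htΥ : t^2 * Υ ≤ t*δ/8 := by
      have h := mul_le_mul_of_nonneg_left htδ ht0.le
      have hne : (8:ℝ)*Υ ≠ 0 := by positivity
      have : t * (δ / (8*Υ)) * Υ = t*δ/8 := by field_simp
      nlinarith [mul_le_mul_of_nonneg_right h hΥ0.le]
    have hCm : (Υ + δ/8) * (S:ℝ)^(1-ρ-κ) ≤ δ/8 * (S:ℝ)^(1-ρ) := by
      have e : (Υ + δ/8) * (S:ℝ)^(1-ρ-κ) = ((Υ + δ/8) * (S:ℝ)^(-κ)) * (S:ℝ)^(1-ρ) := by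
        rw [← hMq2]; ring
      rw [e]
      exact mul_le_mul_of_nonneg_right hCc' hM0
    -- exponent bounds
    have hup : ∀ i, -t * ((Υ+δ) * (S:ℝ)^(1-ρ)) + (Real.exp t - 1) * (∑ j, P S i j)
        ≤ -c * (S:ℝ)^(1-ρ) := by
      intro i
      exact my_arith_up ht0 hcdef hδ0 he0 (by linarith [he1]) (hpsum0 i) (hsum_le i)
        hM0 hq0' htΥ hCm
    have hlo : ∀ i, -(-t) * ((1-δ) * (S:ℝ)^(1-ρ)) + (Real.exp (-t) - 1) * (∑ j, P S i j)
        ≤ -c * (S:ℝ)^(1-ρ) := by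
      intro i
      have ht8 : t^2 ≤ t*δ/8 := by nlinarith [htΥ, hΥ, sq_nonneg t, ht0.le]
      exact my_arith_lo ht0 hcdef hδ0 he2 hem hM0 (hsum_ge i) ht8
    -- per-row measure bounds
    have hrow_ind : ∀ i : Fin (R S), iIndepFun
        (fun j => Z S i j) (μ S) := fun i =>
      my_precomp (hind S) (fun j => (i, j)) (fun a b hab => by simpa using congrArg Prod.snd hab)
    have hup' : ∀ i : Fin (R S),
        μ S {ω | (Υ+δ)*(S:ℝ)^(1-ρ) ≤ ∑ j, if Z S i j ω then (1:ℝ) else 0}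
          ≤ ENNReal.ofReal (Real.exp (-c*(S:ℝ)^(1-ρ))) := fun i =>
      (my_tail_up (fun j => hmeas S i j) (hrow_ind i) (fun j => hmarg S i j)
        (fun j => hp0 i j) (fun j => hp1 i j) _ ht0.le).trans
        (ENNReal.ofReal_le_ofReal (Real.exp_le_exp.2 (hup i)))
    have hlo' : ∀ i : Fin (R S),
        μ S {ω | (∑ j, if Z S i j ω then (1:ℝ) else 0) ≤ (1-δ)*(S:ℝ)^(1-ρ)}
          ≤ ENNReal.ofReal (Real.exp (-c*(S:ℝ)^(1-ρ))) := fun i =>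
      (my_tail_lo (fun j => hmeas S i j) (hrow_ind i) (fun j => hmarg S i j)
        (fun j => hp0 i j) (fun j => hp1 i j) (t := -t) _ (by linarith)).trans
        (ENNReal.ofReal_le_ofReal (Real.exp_le_exp.2 (hlo i)))
    -- union bound
    have hsubset : {ω | ∀ i : Fin (R S),
        (1 - δ) * (S : ℝ) ^ (1 - ρ) ≤ (∑ j, if Z S i j ω then (1 : ℝ) else 0) ∧
        (∑ j, if Z S i j ω then (1 : ℝ) else 0) ≤ (Υ + δ) * (S : ℝ) ^ (1 - ρ)}ᶜ
        ⊆ ⋃ i : Fin (R S),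
          ({ω | (∑ j, if Z S i j ω then (1:ℝ) else 0) ≤ (1-δ)*(S:ℝ)^(1-ρ)}
           ∪ {ω | (Υ+δ)*(S:ℝ)^(1-ρ) ≤ ∑ j, if Z S i j ω then (1:ℝ) else 0}) := by
      intro ω hω
      simp only [Set.mem_compl_iff, Set.mem_setOf_eq, not_forall] at hω
      obtain ⟨i, hi⟩ := hω
      refine Set.mem_iUnion.2 ⟨i, ?_⟩
      rcases not_and_or.1 hi with h' | h'
      · exact Or.inl (not_le.1 h').le
      · exact Or.inr (not_le.1 h').le
    calc μ S _ ≤ μ S (⋃ i : Fin (R S),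
          ({ω | (∑ j, if Z S i j ω then (1:ℝ) else 0) ≤ (1-δ)*(S:ℝ)^(1-ρ)}
           ∪ {ω | (Υ+δ)*(S:ℝ)^(1-ρ) ≤ ∑ j, if Z S i j ω then (1:ℝ) else 0})) :=
          measure_mono hsubset
      _ ≤ ∑' i : Fin (R S), μ S
          ({ω | (∑ j, if Z S i j ω then (1:ℝ) else 0) ≤ (1-δ)*(S:ℝ)^(1-ρ)}
           ∪ {ω | (Υ+δ)*(S:ℝ)^(1-ρ) ≤ ∑ j, if Z S i j ω then (1:ℝ) else 0}) :=
          measure_iUnion_le _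
      _ = ∑ i : Fin (R S), μ S
          ({ω | (∑ j, if Z S i j ω then (1:ℝ) else 0) ≤ (1-δ)*(S:ℝ)^(1-ρ)}
           ∪ {ω | (Υ+δ)*(S:ℝ)^(1-ρ) ≤ ∑ j, if Z S i j ω then (1:ℝ) else 0}) :=
          tsum_fintype _
      _ ≤ ∑ _i : Fin (R S), (ENNReal.ofReal (Real.exp (-c*(S:ℝ)^(1-ρ)))
            + ENNReal.ofReal (Real.exp (-c*(S:ℝ)^(1-ρ)))) :=
          Finset.sum_le_sum fun i _ =>
            (measure_union_le _ _).trans (add_le_add (hlo' i) (hup' i))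
      _ = (R S : ENNReal) * (ENNReal.ofReal (Real.exp (-c*(S:ℝ)^(1-ρ)))
            + ENNReal.ofReal (Real.exp (-c*(S:ℝ)^(1-ρ)))) := by
          simp [Finset.sum_const, nsmul_eq_mul, mul_add]
      _ ≤ ENNReal.ofReal (2*((S:ℝ)^ρ+1) * Real.exp (-c * (S:ℝ)^(1-ρ))) := by
          rw [← ENNReal.ofReal_natCast (R S),
            ← ENNReal.ofReal_add (Real.exp_pos _).le (Real.exp_pos _).le,
            ← ENNReal.ofReal_mul (Nat.cast_nonneg _)]
          apply ENNReal.ofReal_le_ofReal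
          have hR' : (R S : ℝ) ≤ (S:ℝ)^ρ + 1 := by
            rw [hR S]
            exact (Nat.ceil_lt_add_one (Real.rpow_nonneg hSpos.le _)).le
          nlinarith [Real.exp_pos (-c*(S:ℝ)^(1-ρ)), hR',
            (Real.rpow_nonneg hSpos.le ρ)]
  -- limit of the bound
  have hg : Tendsto (fun S : ℕ => 2*((S:ℝ)^ρ+1) * Real.exp (-c * (S:ℝ)^(1-ρ)))
      atTop (nhds 0) := by
    have hu : Tendsto (fun S : ℕ => (S:ℝ)^(1-ρ)) atTop atTop :=
      (tendsto_rpow_atTop (by linarith)).comp hScast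
    have hh : Tendsto (fun u : ℝ => 2*(u^(ρ/(1-ρ))+1) * Real.exp (-c*u)) atTop (nhds 0) := by
      have h1 := tendsto_rpow_mul_exp_neg_mul_atTop_nhds_zero (ρ/(1-ρ)) c hc0
      have h2' : Tendsto (fun u : ℝ => c*u) atTop atTop :=
        Tendsto.const_mul_atTop hc0 tendsto_id
      have h2 : Tendsto (fun u : ℝ => Real.exp (-c*u)) atTop (nhds 0) := by
        refine (Real.tendsto_exp_neg_atTop_nhds_zero.comp h2').congr fun u => ?_
        simp [Function.comp, neg_mul]
      have h3 := (h1.const_mul 2).add (h2.const_mul 2)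
      norm_num at h3
      refine h3.congr fun u => by ring
    refine (hh.comp hu).congr fun S => ?_
    simp only [Function.comp_apply]
    have hpow : ((S:ℝ)^(1-ρ))^(ρ/(1-ρ)) = (S:ℝ)^ρ := by
      rw [← Real.rpow_mul (Nat.cast_nonneg S), mul_comm,
        div_mul_cancel₀ _ (ne_of_gt (by linarith : (0:ℝ) < 1 - ρ))]
    rw [hpow]
  -- measurability of the event
  have hEm : ∀ S : ℕ, MeasurableSet {ω | ∀ i : Fin (R S),
        (1 - δ) * (S : ℝ) ^ (1 - ρ) ≤ (∑ j, if Z S i j ω then (1 : ℝ) else 0) ∧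
        (∑ j, if Z S i j ω then (1 : ℝ) else 0) ≤ (Υ + δ) * (S : ℝ) ^ (1 - ρ)} := by
    intro S
    have he : {ω | ∀ i : Fin (R S),
        (1 - δ) * (S : ℝ) ^ (1 - ρ) ≤ (∑ j, if Z S i j ω then (1 : ℝ) else 0) ∧
        (∑ j, if Z S i j ω then (1 : ℝ) else 0) ≤ (Υ + δ) * (S : ℝ) ^ (1 - ρ)}
        = ⋂ i : Fin (R S),
          ({ω | (1 - δ) * (S : ℝ) ^ (1 - ρ) ≤ (∑ j, if Z S i j ω then (1 : ℝ) else 0)}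
           ∩ {ω | (∑ j, if Z S i j ω then (1 : ℝ) else 0) ≤ (Υ + δ) * (S : ℝ) ^ (1 - ρ)}) := by
      ext ω
      simp [Set.mem_iInter, Set.mem_setOf_eq, forall_and]
    rw [he]
    refine MeasurableSet.iInter fun i => ?_
    have hf : Measurable fun ω => ∑ j, if Z S i j ω then (1:ℝ) else 0 :=
      Finset.measurable_sum _ fun j _ =>
        (measurable_from_top (f := fun b : Bool => if b then (1:ℝ) else 0)).comp (hmeas S i j)
    exact (measurableSet_le measurable_const hf).inter (measurableSet_le hf measurable_const)
  have hcompl : Tendsto (fun S => μ S {ω | ∀ i : Fin (R S),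
        (1 - δ) * (S : ℝ) ^ (1 - ρ) ≤ (∑ j, if Z S i j ω then (1 : ℝ) else 0) ∧
        (∑ j, if Z S i j ω then (1 : ℝ) else 0) ≤ (Υ + δ) * (S : ℝ) ^ (1 - ρ)}ᶜ)
      atTop (nhds 0) := by
    refine tendsto_of_tendsto_of_tendsto_of_le_of_le' tendsto_const_nhds ?_
      (Filter.Eventually.of_forall fun S => zero_le) hbound
    have h := ENNReal.tendsto_ofReal hg
    simpa using h
  have heq : ∀ S : ℕ, μ S {ω | ∀ i : Fin (R S),
        (1 - δ) * (S : ℝ) ^ (1 - ρ) ≤ (∑ j, if Z S i j ω then (1 : ℝ) else 0) ∧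
        (∑ j, if Z S i j ω then (1 : ℝ) else 0) ≤ (Υ + δ) * (S : ℝ) ^ (1 - ρ)}
      = 1 - μ S {ω | ∀ i : Fin (R S),
        (1 - δ) * (S : ℝ) ^ (1 - ρ) ≤ (∑ j, if Z S i j ω then (1 : ℝ) else 0) ∧
        (∑ j, if Z S i j ω then (1 : ℝ) else 0) ≤ (Υ + δ) * (S : ℝ) ^ (1 - ρ)}ᶜ := by
    intro S
    have h := prob_compl_eq_one_sub (μ := μ S) (hEm S).compl
    rwa [compl_compl] at h
  refine Tendsto.congr (fun S => (heq S).symm) ?_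
  have h := ((ENNReal.continuous_sub_left ENNReal.one_ne_top).tendsto 0).comp hcompl
  simpa [Function.comp_def] using h
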